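/- The map ω : ℝ^{2N} → ℝ^{2N}, (y,θ) ↦ (x,p), where x ∈ ℝ^N is the unique solution of y_i = x_i + Σ_{j≠i} ψ_θ(x_i−x_j, θ_i−θ_j) and then p is given by p_i = θ_i + Σ_{j≠i} ψ_x(x_i−x_j, θ_i−θ_j), is a C¹ diffeomorphism of ℝ^{2N} onto ℝ^{2N}. -/

import Mathlib

open Finset

open Function


local notation "P" n => Fin n → ℝ

-- dot product facts
lemma sq_norm_le_dot {n : ℕ} (w : Fin n → ℝ) : ‖w‖ * ‖w‖ ≤ ∑ i, w i * w i := by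
  have hnn : (0:ℝ) ≤ ∑ i, w i * w i := Finset.sum_nonneg fun i _ => mul_self_nonneg _
  have h1 : ‖w‖ ≤ Real.sqrt (∑ i, w i * w i) := by
    apply (pi_norm_le_iff_of_nonneg (Real.sqrt_nonneg _)).2
    intro i
    rw [Real.norm_eq_abs, ← Real.sqrt_mul_self_eq_abs]
    exact Real.sqrt_le_sqrt (Finset.single_le_sum (fun j _ => mul_self_nonneg (w j))
      (Finset.mem_univ i))
  calc ‖w‖ * ‖w‖ ≤ Real.sqrt (∑ i, w i * w i) * Real.sqrt (∑ i, w i * w i) :=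
        mul_le_mul h1 h1 (norm_nonneg _) (Real.sqrt_nonneg _)
    _ = ∑ i, w i * w i := Real.mul_self_sqrt hnn

lemma dot_le_card_norm {n : ℕ} (a w : Fin n → ℝ) : ∑ i, a i * w i ≤ n * (‖a‖ * ‖w‖) := by
  calc ∑ i, a i * w i ≤ ∑ i, ‖a‖ * ‖w‖ := by
        apply Finset.sum_le_sum
        intro i _
        calc a i * w i ≤ |a i * w i| := le_abs_self _
          _ = |a i| * |w i| := abs_mul _ _
          _ ≤ ‖a‖ * ‖w‖ := by
              have h1 : |a i| ≤ ‖a‖ := norm_le_pi_norm a i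
              have h2 : |w i| ≤ ‖w‖ := norm_le_pi_norm w i
              exact mul_le_mul h1 h2 (abs_nonneg _) (norm_nonneg _)
    _ = n * (‖a‖ * ‖w‖) := by simp [Finset.sum_const, Finset.card_univ]

lemma dot_self_eq_zero {n : ℕ} {w : Fin n → ℝ} (h : ∑ i, w i * w i ≤ 0) : w = 0 := by
  funext i
  by_contra hi
  have h1 : 0 < w i * w i := mul_self_pos.2 hi
  have h2 : 0 < ∑ j, w j * w j :=
    Finset.sum_pos' (fun j _ => mul_self_nonneg _) ⟨i, Finset.mem_univ i, h1⟩
  linarith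

/-- strong monotonicity ⇒ derivative lower bound -/
lemma fderiv_dot_lb {n : ℕ} {G : (P n) → (P n)} {A : (P n) →L[ℝ] (P n)} {x : P n}
    (hA : HasFDerivAt G A x)
    (hmono : ∀ u v, ∑ i, (u i - v i) * (u i - v i) ≤ ∑ i, (G u i - G v i) * (u i - v i))
    (v : P n) : ∑ i, v i * v i ≤ ∑ i, A v i * v i := by
  -- curve t ↦ x + t • v
  have hline : HasDerivAt (fun t : ℝ => x + t • v) v 0 := by
    simpa using ((hasDerivAt_id (0:ℝ)).smul_const v).const_add x
  have hcomp : HasDerivAt (fun t : ℝ => G (x + t • v)) (A v) 0 := by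
    have hA' : HasFDerivAt G A ((fun t : ℝ => x + t • v) 0) := by simpa using hA
    exact hA'.comp_hasDerivAt 0 hline
  -- scalar function g
  set g : ℝ → ℝ := fun t => ∑ i, (G (x + t • v) i - G x i) * v i with hg
  have hgd : HasDerivAt g (∑ i, A v i * v i) 0 := by
    apply HasDerivAt.fun_sum
    intro i _
    have h1 : HasDerivAt (fun t : ℝ => G (x + t • v) i) (A v i) 0 :=
      (hasDerivAt_pi.1 hcomp) i
    simpa using (h1.sub_const (G x i)).mul_const (v i)
  have hg0 : g 0 = 0 := by simp [hg]
  -- slope inequality for t > 0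
  have hslope : ∀ t : ℝ, 0 < t → ∑ i, v i * v i ≤ g t / t := by
    intro t ht
    have h1 := hmono (x + t • v) x
    have h2 : ∀ i : Fin n, (x + t • v) i - x i = t * v i := by intro i; simp [mul_comm]
    rw [Finset.sum_congr rfl (fun i _ => by rw [h2 i]), Finset.sum_congr rfl
      (fun i _ => by rw [h2 i] : ∀ i ∈ Finset.univ, (G (x + t • v) i - G x i) * ((x + t • v) i - x i) = (G (x + t • v) i - G x i) * (t * v i))] at h1
    have h3 : t * t * ∑ i, v i * v i ≤ t * g t := by
      calc t * t * ∑ i, v i * v i = ∑ i, t * v i * (t * v i) := by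
            rw [Finset.mul_sum]; congr 1; funext i; ring
        _ ≤ ∑ i, (G (x + t • v) i - G x i) * (t * v i) := h1
        _ = t * g t := by rw [hg, Finset.mul_sum]; congr 1; funext i; ring
    rw [le_div_iff₀ ht]
    nlinarith
  -- take limit t → 0+
  have htend : Filter.Tendsto (fun t => g t / t) (nhdsWithin 0 (Set.Ioi 0))
      (nhds (∑ i, A v i * v i)) := by
    have h0 := hasDerivAt_iff_tendsto_slope.1 hgd
    have h1 : Filter.Tendsto (slope g 0) (nhdsWithin 0 (Set.Ioi 0))
        (nhds (∑ i, A v i * v i)) :=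
      h0.mono_left (nhdsWithin_mono 0 (fun t ht => ne_of_gt ht))
    apply h1.congr'
    filter_upwards [self_mem_nhdsWithin] with t ht
    simp [slope, hg0, div_eq_inv_mul]
  exact ge_of_tendsto htend (by
    filter_upwards [self_mem_nhdsWithin] with t ht
    exact hslope t ht)

noncomputable def cleOfBij {E : Type*} [NormedAddCommGroup E] [NormedSpace ℝ E]
    [FiniteDimensional ℝ E] (A : E →L[ℝ] E) (h : Function.Injective A) : E ≃L[ℝ] E :=
  (LinearEquiv.ofBijective A.toLinearMap
    ⟨h, LinearMap.injective_iff_surjective.mp h⟩).toContinuousLinearEquiv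

lemma cleOfBij_coe {E : Type*} [NormedAddCommGroup E] [NormedSpace ℝ E]
    [FiniteDimensional ℝ E] (A : E →L[ℝ] E) (h : Function.Injective A) :
    ((cleOfBij A h : E ≃L[ℝ] E) : E →L[ℝ] E) = A := by ext v; rfl

theorem invFun_contDiff {E : Type*} [NormedAddCommGroup E] [NormedSpace ℝ E]
    [FiniteDimensional ℝ E] (f : E → E) (hf : ContDiff ℝ 1 f) (hbij : Function.Bijective f)
    (hd : ∀ x, Function.Injective (fderiv ℝ f x)) : ContDiff ℝ 1 (Function.invFun f) := by
  rw [contDiff_iff_contDiffAt]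
  intro b
  obtain ⟨a, rfl⟩ := hbij.2 b
  set e := cleOfBij (fderiv ℝ f a) (hd a) with he
  have hfd : HasFDerivAt f ((e : E →L[ℝ] E)) a := by
    rw [he, cleOfBij_coe]
    exact (hf.differentiable one_ne_zero a).hasFDerivAt
  have hca : ContDiffAt ℝ 1 f a := hf.contDiffAt
  have hloc := hca.to_localInverse (f' := e) hfd one_ne_zero
  apply hloc.congr_of_eventuallyEq
  have hev := (hca.hasStrictFDerivAt' hfd one_ne_zero).eventually_right_inverse
  filter_upwards [hev] with y hy
  refine hbij.1 ?_
  rw [Function.invFun_eq (hbij.2 y)]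
  exact hy.symm

section Mono
variable {n : ℕ} {G : (Fin n → ℝ) → (Fin n → ℝ)}

theorem mono_inj
    (hmono : ∀ u v, ∑ i, (u i - v i) * (u i - v i) ≤ ∑ i, (G u i - G v i) * (u i - v i)) :
    Function.Injective G := by
  intro u v huv
  have h := hmono u v
  rw [huv] at h
  simp only [sub_self, zero_mul, Finset.sum_const_zero] at h
  have hw : (fun i => u i - v i) = 0 := dot_self_eq_zero (by simpa using h)
  funext i
  have := congrFun hw i
  simp at this
  linarith

theorem mono_fderiv_inj (hG : ContDiff ℝ 1 G)
    (hmono : ∀ u v, ∑ i, (u i - v i) * (u i - v i) ≤ ∑ i, (G u i - G v i) * (u i - v i))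
    (x : Fin n → ℝ) : Function.Injective (fderiv ℝ G x) := by
  have hA := (hG.differentiable one_ne_zero x).hasFDerivAt
  set A := fderiv ℝ G x
  have key : ∀ v, A v = 0 → v = 0 := by
    intro v hv
    have h := fderiv_dot_lb hA hmono v
    rw [hv] at h
    simp only [Pi.zero_apply, zero_mul, Finset.sum_const_zero] at h
    have := dot_self_eq_zero (w := v) (by simpa using h)
    exact this
  intro v w hvw
  have h1 : A (v - w) = 0 := by rw [map_sub, hvw, sub_self]
  have := key _ h1
  rwa [sub_eq_zero] at this

theorem mono_bijective (hG : ContDiff ℝ 1 G)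
    (hmono : ∀ u v, ∑ i, (u i - v i) * (u i - v i) ≤ ∑ i, (G u i - G v i) * (u i - v i)) :
    Function.Bijective G := by
  have hinj : Function.Injective G := mono_inj hmono
  refine ⟨hinj, ?_⟩
  -- properness bound
  have hprop : ∀ u v, ‖u - v‖ ≤ n * ‖G u - G v‖ := by
    intro u v
    have h1 := sq_norm_le_dot (u - v)
    have h2 : ∑ i, (u - v) i * (u - v) i ≤ ∑ i, (G u - G v) i * (u - v) i := by
      simpa using hmono u v
    have h3 := dot_le_card_norm (G u - G v) (u - v)
    by_cases h : ‖u - v‖ = 0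
    · rw [h]; positivity
    · have hpos : 0 < ‖u - v‖ := lt_of_le_of_ne (norm_nonneg _) (Ne.symm h)
      have h4 : ‖u - v‖ * ‖u - v‖ ≤ n * (‖G u - G v‖ * ‖u - v‖) := le_trans h1 (le_trans h2 h3)
      nlinarith
  -- open range
  have hopen : IsOpen (Set.range G) := by
    rw [isOpen_iff_mem_nhds]
    rintro b ⟨a, rfl⟩
    set e := cleOfBij (fderiv ℝ G a) (mono_fderiv_inj hG hmono a) with he
    have hfd : HasFDerivAt G ((e : (Fin n → ℝ) →L[ℝ] (Fin n → ℝ))) a := by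
      rw [he, cleOfBij_coe]
      exact (hG.differentiable one_ne_zero a).hasFDerivAt
    have hstrict := hG.contDiffAt.hasStrictFDerivAt' hfd one_ne_zero
    rw [← hstrict.map_nhds_eq_of_equiv]
    exact Filter.mem_map.2 (Filter.univ_mem' (fun x => Set.mem_range_self x))
  -- closed range
  have hclosed : IsClosed (Set.range G) := by
    apply IsSeqClosed.isClosed
    intro xseq b hxmem htend
    choose u hu using hxmem
    obtain ⟨C, hC⟩ := (Metric.isBounded_range_of_tendsto xseq htend).exists_norm_le
    have hub : ∀ k, ‖u k‖ ≤ n * (C + C) + ‖u 0‖ := by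
      intro k
      have h1 : ‖u k - u 0‖ ≤ n * ‖xseq k - xseq 0‖ := by
        have := hprop (u k) (u 0); rwa [hu k, hu 0] at this
      have h2 : ‖xseq k - xseq 0‖ ≤ C + C := by
        calc ‖xseq k - xseq 0‖ ≤ ‖xseq k‖ + ‖xseq 0‖ := norm_sub_le _ _
          _ ≤ C + C := add_le_add (hC _ (Set.mem_range_self k)) (hC _ (Set.mem_range_self 0))
      calc ‖u k‖ = ‖(u k - u 0) + u 0‖ := by ring_nf
        _ ≤ ‖u k - u 0‖ + ‖u 0‖ := norm_add_le _ _
        _ ≤ n * (C + C) + ‖u 0‖ := by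
            refine add_le_add ?_ le_rfl
            calc ‖u k - u 0‖ ≤ n * ‖xseq k - xseq 0‖ := h1
              _ ≤ n * (C + C) := by
                  apply mul_le_mul_of_nonneg_left h2 (by positivity)
    have hcpt : IsCompact (Metric.closedBall (0 : Fin n → ℝ) (n * (C + C) + ‖u 0‖)) :=
      isCompact_closedBall _ _
    obtain ⟨z, hz, φ, hφ, hconv⟩ := hcpt.tendsto_subseq
      (fun k => by rw [Metric.mem_closedBall, dist_zero_right]; exact hub k)
    refine ⟨z, ?_⟩
    have h1 : Filter.Tendsto (fun k => G (u (φ k))) Filter.atTop (nhds (G z)) :=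
      (hG.continuous.continuousAt.tendsto).comp hconv
    have h2 : Filter.Tendsto (fun k => G (u (φ k))) Filter.atTop (nhds b) := by
      simp only [hu]
      exact htend.comp hφ.tendsto_atTop
    exact tendsto_nhds_unique h1 h2
  -- clopen nonempty in connected space
  intro b
  have huniv : Set.range G = Set.univ :=
    IsClopen.eq_univ ⟨hclosed, hopen⟩ ⟨G 0, Set.mem_range_self 0⟩
  have : b ∈ Set.range G := by rw [huniv]; trivial
  exact this

end Mono

theorem invFun_eq_of_rightInverse {α β : Sort*} [Nonempty α] (f : α → β) (g : β → α)
    (hbij : Function.Bijective f) (h : ∀ y, f (g y) = y) : Function.invFun f = g := by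
  funext y
  exact hbij.1 (by rw [Function.invFun_eq (hbij.2 y), h])

theorem bijective_invFun {α β : Sort*} [Nonempty α] (f : α → β) (h : Function.Bijective f) :
    Function.Bijective (Function.invFun f) := by
  constructor
  · intro y y' hyy'
    have h1 := Function.invFun_eq (f := f) (h.2 y)
    have h2 := Function.invFun_eq (f := f) (h.2 y')
    rw [← h1, ← h2, hyy']
  · intro a
    exact ⟨f a, Function.leftInverse_invFun h.1 a⟩

theorem conj_diffeo {E F : Type*} [NormedAddCommGroup E] [NormedSpace ℝ E]
    [NormedAddCommGroup F] [NormedSpace ℝ F] (e : E ≃L[ℝ] F) (f : E → E)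
    (h : Function.Bijective f ∧ ContDiff ℝ 1 f ∧ ContDiff ℝ 1 (Function.invFun f)) :
    Function.Bijective (fun y => e (f (e.symm y)))
      ∧ ContDiff ℝ 1 (fun y => e (f (e.symm y)))
      ∧ ContDiff ℝ 1 (Function.invFun (fun y => e (f (e.symm y)))) := by
  obtain ⟨hbij, hC, hCinv⟩ := h
  have hgbij : Function.Bijective (fun y => e (f (e.symm y))) :=
    (e.bijective.comp hbij).comp e.symm.bijective
  refine ⟨hgbij, (e.contDiff.comp hC).comp e.symm.contDiff, ?_⟩
  have hinv : Function.invFun (fun y => e (f (e.symm y)))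
      = fun y => e (Function.invFun f (e.symm y)) := by
    apply invFun_eq_of_rightInverse _ _ hgbij
    intro y
    simp [Function.rightInverse_invFun hbij.2 (e.symm y)]
  rw [hinv]
  exact (e.contDiff.comp hCinv).comp e.symm.contDiff

theorem triangular_diffeo {n : ℕ} (G : (Fin n → ℝ) → (Fin n → ℝ) → (Fin n → ℝ))
    (hC : ContDiff ℝ 1 (fun z : (Fin n → ℝ) × (Fin n → ℝ) => G z.2 z.1))
    (hmono : ∀ b u v, ∑ i, (u i - v i) * (u i - v i)
      ≤ ∑ i, (G b u i - G b v i) * (u i - v i)) :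
    Function.Bijective (fun z : (Fin n → ℝ) × (Fin n → ℝ) => ((G z.2 z.1, z.2) : _ × _))
      ∧ ContDiff ℝ 1 (fun z : (Fin n → ℝ) × (Fin n → ℝ) => ((G z.2 z.1, z.2) : _ × _))
      ∧ ContDiff ℝ 1 (Function.invFun
          (fun z : (Fin n → ℝ) × (Fin n → ℝ) => ((G z.2 z.1, z.2) : _ × _))) := by
  set f : (Fin n → ℝ) × (Fin n → ℝ) → (Fin n → ℝ) × (Fin n → ℝ) :=
    fun z => (G z.2 z.1, z.2) with hf
  have hCb : ∀ b, ContDiff ℝ 1 (G b) := by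
    intro b
    have : ContDiff ℝ 1 (fun a : Fin n → ℝ => ((a, b) : _ × _)) :=
      contDiff_id.prodMk contDiff_const
    exact hC.comp this
  have hbijb : ∀ b, Function.Bijective (G b) := fun b => mono_bijective (hCb b) (hmono b)
  have hfC : ContDiff ℝ 1 f := hC.prodMk contDiff_snd
  have hfbij : Function.Bijective f := by
    constructor
    · intro z z' hzz'
      have h2' := congrArg Prod.snd hzz'
      have h1' := congrArg Prod.fst hzz'
      have h2 : z.2 = z'.2 := h2'
      have h1 : G z.2 z.1 = G z'.2 z'.1 := h1'
      rw [h2] at h1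
      have := (hbijb z'.2).1 h1
      exact Prod.ext this h2
    · intro c
      obtain ⟨a, ha⟩ := (hbijb c.2).2 c.1
      exact ⟨(a, c.2), Prod.ext ha rfl⟩
  have hdinj : ∀ z, Function.Injective (fderiv ℝ f z) := by
    rintro ⟨a, b⟩
    set A := fderiv ℝ f (a, b) with hA
    have hdF : HasFDerivAt f A (a, b) := (hfC.differentiable one_ne_zero (a, b)).hasFDerivAt
    -- second component of A w is w.2
    have hsnd : ∀ w, (A w).2 = w.2 := by
      intro w
      have h1 : HasFDerivAt (⇑(ContinuousLinearMap.snd ℝ (Fin n → ℝ) (Fin n → ℝ)) ∘ f)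
          ((ContinuousLinearMap.snd ℝ _ _).comp A) (a, b) :=
        (ContinuousLinearMap.snd ℝ _ _).hasFDerivAt.comp (a, b) hdF
      have h2 : HasFDerivAt (fun z : (Fin n → ℝ) × (Fin n → ℝ) => z.2)
          (ContinuousLinearMap.snd ℝ _ _) (a, b) := hasFDerivAt_snd
      have h3 : (⇑(ContinuousLinearMap.snd ℝ (Fin n → ℝ) (Fin n → ℝ)) ∘ f)
          = fun z : (Fin n → ℝ) × (Fin n → ℝ) => z.2 := rfl
      rw [h3] at h1
      have := h1.unique h2
      calc (A w).2 = ((ContinuousLinearMap.snd ℝ _ _).comp A) w := rfl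
        _ = (ContinuousLinearMap.snd ℝ _ _) w := by rw [this]
        _ = w.2 := rfl
    -- first component along (u, 0)
    have hfst : ∀ u, A (u, 0) = (fderiv ℝ (G b) a u, 0) := by
      intro u
      have hcurve : HasFDerivAt (fun a' : Fin n → ℝ => ((a', b) : _ × _))
          (ContinuousLinearMap.inl ℝ _ _) a := (hasFDerivAt_id a).prodMk (hasFDerivAt_const b a)
      have h1 : HasFDerivAt (fun a' => f (a', b)) (A.comp (ContinuousLinearMap.inl ℝ _ _)) a :=
        hdF.comp a hcurve
      have h2 : HasFDerivAt (fun a' => f (a', b))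
          ((fderiv ℝ (G b) a).prod 0) a := by
        have hGb : HasFDerivAt (G b) (fderiv ℝ (G b) a) a :=
          ((hCb b).differentiable one_ne_zero a).hasFDerivAt
        exact hGb.prodMk (hasFDerivAt_const b a)
      have h3 := h1.unique h2
      calc A (u, 0) = (A.comp (ContinuousLinearMap.inl ℝ _ _)) u := by
            simp [ContinuousLinearMap.inl_apply]
        _ = ((fderiv ℝ (G b) a).prod 0) u := by rw [h3]
        _ = (fderiv ℝ (G b) a u, 0) := rfl
    intro w w' hww'
    have hker : A (w - w') = 0 := by rw [map_sub, hww', sub_self]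
    have h2 : (w - w').2 = 0 := by rw [← hsnd (w - w'), hker]; rfl
    have h4 : (w - w' : _ × _) = ((w - w').1, (0 : Fin n → ℝ)) := by
      rw [← h2]
    have h5 : A ((w - w').1, (0 : Fin n → ℝ)) = 0 := by rw [← h4, hker]
    rw [hfst] at h5
    have h6 : fderiv ℝ (G b) a (w - w').1 = 0 := congrArg Prod.fst h5
    have h7 : (w - w').1 = 0 := by
      apply mono_fderiv_inj (hCb b) (hmono b) a
      rw [h6, map_zero]
    have : w - w' = 0 := by rw [h4, h7]; rfl
    rwa [sub_eq_zero] at this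
  exact ⟨hfbij, hfC, invFun_contDiff f hfC hfbij hdinj⟩

section Psi
variable {ψ ψx ψθ ψxθ : ℝ → ℝ → ℝ}
variable (hC2 : ContDiff ℝ 2 (fun q : ℝ × ℝ => ψ q.1 q.2))
variable (hψx : ∀ x t, HasDerivAt (fun x' => ψ x' t) (ψx x t) x)
variable (hψθ : ∀ x t, HasDerivAt (fun t' => ψ x t') (ψθ x t) t)
variable (hψxθ : ∀ x t, HasDerivAt (fun t' => ψx x t') (ψxθ x t) t)

include hC2 hψx in
lemma psix_eq : ∀ x t, ψx x t = fderiv ℝ (fun q : ℝ × ℝ => ψ q.1 q.2) (x, t) (1, 0) := by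
  intro x t
  have hdiff : Differentiable ℝ (fun q : ℝ × ℝ => ψ q.1 q.2) :=
    hC2.differentiable (by norm_num)
  have hF : HasFDerivAt (fun q : ℝ × ℝ => ψ q.1 q.2)
      (fderiv ℝ (fun q : ℝ × ℝ => ψ q.1 q.2) (x, t)) (x, t) := (hdiff _).hasFDerivAt
  have hc : HasDerivAt (fun s : ℝ => ((s, t) : ℝ × ℝ)) ((1 : ℝ), (0 : ℝ)) x :=
    (hasDerivAt_id x).prodMk (hasDerivAt_const x t)
  have := hF.comp_hasDerivAt x hc
  exact (hψx x t).unique this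

include hC2 hψθ in
lemma psit_eq : ∀ x t, ψθ x t = fderiv ℝ (fun q : ℝ × ℝ => ψ q.1 q.2) (x, t) (0, 1) := by
  intro x t
  have hdiff : Differentiable ℝ (fun q : ℝ × ℝ => ψ q.1 q.2) :=
    hC2.differentiable (by norm_num)
  have hF : HasFDerivAt (fun q : ℝ × ℝ => ψ q.1 q.2)
      (fderiv ℝ (fun q : ℝ × ℝ => ψ q.1 q.2) (x, t)) (x, t) := (hdiff _).hasFDerivAt
  have hc : HasDerivAt (fun s : ℝ => ((x, s) : ℝ × ℝ)) ((0 : ℝ), (1 : ℝ)) t :=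
    (hasDerivAt_const t x).prodMk (hasDerivAt_id t)
  have := hF.comp_hasDerivAt t hc
  exact (hψθ x t).unique this

include hC2 hψx in
lemma psix_contDiff : ContDiff ℝ 1 (fun q : ℝ × ℝ => ψx q.1 q.2) := by
  have h1 : ContDiff ℝ 1 (fderiv ℝ (fun q : ℝ × ℝ => ψ q.1 q.2)) :=
    hC2.fderiv_right (by norm_num)
  have h2 : ContDiff ℝ 1 (fun q : ℝ × ℝ =>
      fderiv ℝ (fun q : ℝ × ℝ => ψ q.1 q.2) q ((1 : ℝ), (0 : ℝ))) :=
    h1.clm_apply contDiff_const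
  have h3 : (fun q : ℝ × ℝ => ψx q.1 q.2) = fun q : ℝ × ℝ =>
      fderiv ℝ (fun q : ℝ × ℝ => ψ q.1 q.2) q ((1 : ℝ), (0 : ℝ)) :=
    funext fun q => psix_eq hC2 hψx q.1 q.2
  rw [h3]
  exact h2

include hC2 hψθ in
lemma psit_contDiff : ContDiff ℝ 1 (fun q : ℝ × ℝ => ψθ q.1 q.2) := by
  have h1 : ContDiff ℝ 1 (fderiv ℝ (fun q : ℝ × ℝ => ψ q.1 q.2)) :=
    hC2.fderiv_right (by norm_num)
  have h2 : ContDiff ℝ 1 (fun q : ℝ × ℝ =>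
      fderiv ℝ (fun q : ℝ × ℝ => ψ q.1 q.2) q ((0 : ℝ), (1 : ℝ))) :=
    h1.clm_apply contDiff_const
  have h3 : (fun q : ℝ × ℝ => ψθ q.1 q.2) = fun q : ℝ × ℝ =>
      fderiv ℝ (fun q : ℝ × ℝ => ψ q.1 q.2) q ((0 : ℝ), (1 : ℝ)) :=
    funext fun q => psit_eq hC2 hψθ q.1 q.2
  rw [h3]
  exact h2

include hψx in
lemma psix_anti (hsym : ∀ x t, ψ (-x) (-t) = ψ x t) :
    ∀ x t, ψx (-x) (-t) = -(ψx x t) := by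
  intro x t
  have h1 : HasDerivAt (fun x' : ℝ => ψ (-x') (-t)) (ψx (-x) (-t) * (-1)) x :=
    (hψx (-x) (-t)).comp x (hasDerivAt_neg x)
  have h2 : (fun x' : ℝ => ψ (-x') (-t)) = fun x' => ψ x' t := funext fun x' => hsym x' t
  rw [h2] at h1
  have := (hψx x t).unique h1
  linarith

include hψθ in
lemma psit_anti (hsym : ∀ x t, ψ (-x) (-t) = ψ x t) :
    ∀ x t, ψθ (-x) (-t) = -(ψθ x t) := by
  intro x t
  have h1 : HasDerivAt (fun t' : ℝ => ψ (-x) (-t')) (ψθ (-x) (-t) * (-1)) t :=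
    (hψθ (-x) (-t)).comp t (hasDerivAt_neg t)
  have h2 : (fun t' : ℝ => ψ (-x) (-t')) = fun t' => ψ x t' := funext fun t' => hsym x t'
  rw [h2] at h1
  have := (hψθ x t).unique h1
  linarith

include hC2 hψx hψθ hψxθ in
lemma psitx (x t : ℝ) : HasDerivAt (fun x' => ψθ x' t) (ψxθ x t) x := by
  set Fψ : ℝ × ℝ → ℝ := fun q => ψ q.1 q.2 with hFψ
  have hdiff : Differentiable ℝ Fψ := hC2.differentiable (by norm_num)
  have h1 : ContDiff ℝ 1 (fderiv ℝ Fψ) := hC2.fderiv_right (by norm_num)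
  set D := fderiv ℝ Fψ with hD
  set A := fderiv ℝ D (x, t) with hA
  have hAat : HasFDerivAt D A (x, t) := (h1.differentiable one_ne_zero _).hasFDerivAt
  -- A (0,1) (1,0) = ψxθ x t
  have hc : HasDerivAt (fun t' : ℝ => ((x, t') : ℝ × ℝ)) ((0 : ℝ), (1 : ℝ)) t :=
    (hasDerivAt_const t x).prodMk (hasDerivAt_id t)
  have h2 : HasDerivAt (fun t' : ℝ => D (x, t')) (A ((0 : ℝ), (1 : ℝ))) t :=
    hAat.comp_hasDerivAt t hc
  have h3 : HasDerivAt (fun t' : ℝ => D (x, t') ((1 : ℝ), (0 : ℝ)))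
      (A ((0 : ℝ), (1 : ℝ)) ((1 : ℝ), (0 : ℝ))) t := by
    have := h2.clm_apply (hasDerivAt_const t ((1 : ℝ), (0 : ℝ)))
    simpa using this
  have h4 : (fun t' : ℝ => D (x, t') ((1 : ℝ), (0 : ℝ))) = fun t' => ψx x t' :=
    funext fun t' => (psix_eq hC2 hψx x t').symm
  rw [h4] at h3
  have key1 : A ((0 : ℝ), (1 : ℝ)) ((1 : ℝ), (0 : ℝ)) = ψxθ x t := ((hψxθ x t).unique h3).symm
  -- symmetric derivative
  have hsymm := second_derivative_symmetric (f := Fψ) (f' := D) (f'' := A)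
    (fun y => (hdiff y).hasFDerivAt) hAat ((1 : ℝ), (0 : ℝ)) ((0 : ℝ), (1 : ℝ))
  -- HasDerivAt (fun x' => ψθ x' t) (A (1,0) (0,1)) x
  have hcx : HasDerivAt (fun x' : ℝ => ((x', t) : ℝ × ℝ)) ((1 : ℝ), (0 : ℝ)) x :=
    (hasDerivAt_id x).prodMk (hasDerivAt_const x t)
  have h5 : HasDerivAt (fun x' : ℝ => D (x', t)) (A ((1 : ℝ), (0 : ℝ))) x :=
    hAat.comp_hasDerivAt x hcx
  have h6 : HasDerivAt (fun x' : ℝ => D (x', t) ((0 : ℝ), (1 : ℝ)))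
      (A ((1 : ℝ), (0 : ℝ)) ((0 : ℝ), (1 : ℝ))) x := by
    have := h5.clm_apply (hasDerivAt_const x ((0 : ℝ), (1 : ℝ)))
    simpa using this
  have h7 : (fun x' : ℝ => D (x', t) ((0 : ℝ), (1 : ℝ))) = fun x' => ψθ x' t :=
    funext fun x' => (psit_eq hC2 hψθ x' t).symm
  rw [h7] at h6
  rw [hsymm, key1] at h6
  exact h6

end Psi

lemma mono_mul_nonneg {f : ℝ → ℝ} (hf : Monotone f) (s s' : ℝ) :
    0 ≤ (f s - f s') * (s - s') := by
  rcases le_total s' s with h | h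
  · have := hf h; nlinarith
  · have := hf h; nlinarith

lemma cross_nonneg {n : ℕ} (T : Fin n → Fin n → ℝ) (w : Fin n → ℝ)
    (hanti : ∀ i j, T j i = -T i j) (hpair : ∀ i j, 0 ≤ T i j * (w i - w j)) :
    0 ≤ ∑ i, (∑ j ∈ Finset.univ.erase i, T i j) * w i := by
  have hrw : ∑ i, (∑ j ∈ Finset.univ.erase i, T i j) * w i
      = ∑ i, ∑ j ∈ Finset.univ.erase i, T i j * w i := by
    apply Finset.sum_congr rfl
    intro i _
    rw [Finset.sum_mul]
  set S := ∑ i, ∑ j ∈ Finset.univ.erase i, T i j * w i with hS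
  have hswap : S = ∑ i, ∑ j ∈ Finset.univ.erase i, T j i * w j := by
    rw [hS]
    exact Finset.sum_comm' (by
      intro x y
      simp only [Finset.mem_univ, true_and, Finset.mem_erase, and_true]
      exact ne_comm)
  have h2 : S + S = ∑ i, ∑ j ∈ Finset.univ.erase i, T i j * (w i - w j) := by
    nth_rewrite 2 [hswap]
    rw [hS, ← Finset.sum_add_distrib]
    apply Finset.sum_congr rfl
    intro i _
    rw [← Finset.sum_add_distrib]
    apply Finset.sum_congr rfl
    intro j _
    rw [hanti i j]
    ring
  have h3 : 0 ≤ S + S := by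
    rw [h2]
    exact Finset.sum_nonneg fun i _ => Finset.sum_nonneg fun j _ => hpair i j
  rw [hrw]
  linarith

/-- The map `ω : (y,θ) ↦ (x,p)` of the semiclassical Bethe system, defined by solving
`yᵢ = xᵢ + ∑_{j≠i} ψ_θ(xᵢ−xⱼ, θᵢ−θⱼ)` for `x` and setting
`pᵢ = θᵢ + ∑_{j≠i} ψ_x(xᵢ−xⱼ, θᵢ−θⱼ)`, is a `C¹` diffeomorphism of `ℝ^{2N}`. -/
theorem stmt3 (N : ℕ) (ε : ℝ) (hε : 0 < ε)
    (ψ ψx ψθ ψxθ : ℝ → ℝ → ℝ)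
    (hC2 : ContDiff ℝ 2 (fun q : ℝ × ℝ => ψ q.1 q.2))
    (hψx : ∀ x t, HasDerivAt (fun x' => ψ x' t) (ψx x t) x)
    (hψθ : ∀ x t, HasDerivAt (fun t' => ψ x t') (ψθ x t) t)
    (hψxθ : ∀ x t, HasDerivAt (fun t' => ψx x t') (ψxθ x t) t)
    (hpos : ∀ x t, 0 ≤ ψxθ x t)
    (hsym : ∀ x t, ψ (-x) (-t) = ψ x t)
    (hrange : ∀ x t, ε ≤ |x| → ψx x t = 0)
    (ω : (Fin N → ℝ) × (Fin N → ℝ) → (Fin N → ℝ) × (Fin N → ℝ))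
    (hω1 : ∀ (y θ : Fin N → ℝ) (i : Fin N),
      y i = (ω (y, θ)).1 i
        + ∑ j ∈ Finset.univ.erase i,
            ψθ ((ω (y, θ)).1 i - (ω (y, θ)).1 j) (θ i - θ j))
    (hω2 : ∀ (y θ : Fin N → ℝ) (i : Fin N),
      (ω (y, θ)).2 i = θ i
        + ∑ j ∈ Finset.univ.erase i,
            ψx ((ω (y, θ)).1 i - (ω (y, θ)).1 j) (θ i - θ j)) :
    Function.Bijective ω ∧ ContDiff ℝ 1 ω ∧ ContDiff ℝ 1 (Function.invFun ω) := by
  -- derived facts about ψ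
  have hax : ∀ x t, ψx (-x) (-t) = -(ψx x t) := psix_anti hψx hsym
  have hat : ∀ x t, ψθ (-x) (-t) = -(ψθ x t) := psit_anti hψθ hsym
  have hmt : ∀ d, Monotone (fun t => ψx d t) := by
    intro d
    apply monotone_of_deriv_nonneg
    · exact fun t => (hψxθ d t).differentiableAt
    · intro t
      rw [(hψxθ d t).deriv]
      exact hpos d t
  have hptx : ∀ x t, HasDerivAt (fun x' => ψθ x' t) (ψxθ x t) x := psitx hC2 hψx hψθ hψxθ
  have hmx : ∀ t, Monotone (fun x => ψθ x t) := by
    intro t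
    apply monotone_of_deriv_nonneg
    · exact fun x => (hptx x t).differentiableAt
    · intro x
      rw [(hptx x t).deriv]
      exact hpos x t
  have Cψx := psix_contDiff hC2 hψx
  have Cψθ := psit_contDiff hC2 hψθ
  have he1 : ∀ i : Fin N, ContDiff ℝ 1
      (fun z : (Fin N → ℝ) × (Fin N → ℝ) => z.1 i) :=
    fun i => (contDiff_pi.1 contDiff_fst) i
  have he2 : ∀ i : Fin N, ContDiff ℝ 1
      (fun z : (Fin N → ℝ) × (Fin N → ℝ) => z.2 i) :=
    fun i => (contDiff_pi.1 contDiff_snd) i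
  -- the two triangular factors
  set GΦ : (Fin N → ℝ) → (Fin N → ℝ) → (Fin N → ℝ) :=
    fun θv xv i => xv i + ∑ j ∈ Finset.univ.erase i, ψθ (xv i - xv j) (θv i - θv j) with hGΦ
  set GΨ : (Fin N → ℝ) → (Fin N → ℝ) → (Fin N → ℝ) :=
    fun xv θv i => θv i + ∑ j ∈ Finset.univ.erase i, ψx (xv i - xv j) (θv i - θv j) with hGΨ
  have hCΦ : ContDiff ℝ 1 (fun z : (Fin N → ℝ) × (Fin N → ℝ) => GΦ z.2 z.1) := by
    apply contDiff_pi.2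
    intro i
    apply ContDiff.add (he1 i)
    apply ContDiff.sum
    intro j _
    exact Cψθ.comp (((he1 i).sub (he1 j)).prodMk ((he2 i).sub (he2 j)))
  have hCΨ : ContDiff ℝ 1 (fun z : (Fin N → ℝ) × (Fin N → ℝ) => GΨ z.2 z.1) := by
    apply contDiff_pi.2
    intro i
    apply ContDiff.add (he1 i)
    apply ContDiff.sum
    intro j _
    exact Cψx.comp (((he2 i).sub (he2 j)).prodMk ((he1 i).sub (he1 j)))
  have hmonoΦ : ∀ b u v, ∑ i, (u i - v i) * (u i - v i)
      ≤ ∑ i, (GΦ b u i - GΦ b v i) * (u i - v i) := by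
    intro b u v
    have key := cross_nonneg
      (fun i j => ψθ (u i - u j) (b i - b j) - ψθ (v i - v j) (b i - b j))
      (fun i => u i - v i)
      (by
        intro i j
        have h1 : u j - u i = -(u i - u j) := by ring
        have h2 : b j - b i = -(b i - b j) := by ring
        have h3 : v j - v i = -(v i - v j) := by ring
        rw [h1, h2, h3, hat, hat]
        ring)
      (by
        intro i j
        have hmm := mono_mul_nonneg (hmx (b i - b j)) (u i - u j) (v i - v j)
        have heq : (u i - v i) - (u j - v j) = (u i - u j) - (v i - v j) := by ring
        rw [heq]
        exact hmm)
    have hre : ∑ i, (GΦ b u i - GΦ b v i) * (u i - v i)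
        = ∑ i, (u i - v i) * (u i - v i)
          + ∑ i, (∑ j ∈ Finset.univ.erase i,
              (ψθ (u i - u j) (b i - b j) - ψθ (v i - v j) (b i - b j))) * (u i - v i) := by
      rw [← Finset.sum_add_distrib]
      apply Finset.sum_congr rfl
      intro i _
      simp only [hGΦ]
      rw [Finset.sum_sub_distrib]
      ring
    rw [hre]
    have : 0 ≤ ∑ i, (∑ j ∈ Finset.univ.erase i,
        (ψθ (u i - u j) (b i - b j) - ψθ (v i - v j) (b i - b j))) * (u i - v i) := key
    linarith
  have hmonoΨ : ∀ b u v, ∑ i, (u i - v i) * (u i - v i)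
      ≤ ∑ i, (GΨ b u i - GΨ b v i) * (u i - v i) := by
    intro b u v
    have key := cross_nonneg
      (fun i j => ψx (b i - b j) (u i - u j) - ψx (b i - b j) (v i - v j))
      (fun i => u i - v i)
      (by
        intro i j
        have h1 : u j - u i = -(u i - u j) := by ring
        have h2 : b j - b i = -(b i - b j) := by ring
        have h3 : v j - v i = -(v i - v j) := by ring
        rw [h1, h2, h3, hax, hax]
        ring)
      (by
        intro i j
        have hmm := mono_mul_nonneg (hmt (b i - b j)) (u i - u j) (v i - v j)
        have heq : (u i - v i) - (u j - v j) = (u i - u j) - (v i - v j) := by ring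
        rw [heq]
        exact hmm)
    have hre : ∑ i, (GΨ b u i - GΨ b v i) * (u i - v i)
        = ∑ i, (u i - v i) * (u i - v i)
          + ∑ i, (∑ j ∈ Finset.univ.erase i,
              (ψx (b i - b j) (u i - u j) - ψx (b i - b j) (v i - v j))) * (u i - v i) := by
      rw [← Finset.sum_add_distrib]
      apply Finset.sum_congr rfl
      intro i _
      simp only [hGΨ]
      rw [Finset.sum_sub_distrib]
      ring
    rw [hre]
    have : 0 ≤ ∑ i, (∑ j ∈ Finset.univ.erase i,
        (ψx (b i - b j) (u i - u j) - ψx (b i - b j) (v i - v j))) * (u i - v i) := key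
    linarith
  obtain ⟨hΦbij, hΦC, hΦinv⟩ := triangular_diffeo GΦ hCΦ hmonoΦ
  obtain ⟨hΨbij0, hΨC0, hΨinv0⟩ := triangular_diffeo GΨ hCΨ hmonoΨ
  -- conjugate the second factor by the swap
  have hconj := conj_diffeo (ContinuousLinearEquiv.prodComm ℝ (Fin N → ℝ) (Fin N → ℝ))
    (fun z : (Fin N → ℝ) × (Fin N → ℝ) => ((GΨ z.2 z.1, z.2) : _ × _))
    ⟨hΨbij0, hΨC0, hΨinv0⟩
  have hgeq : (fun y : (Fin N → ℝ) × (Fin N → ℝ) =>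
      (ContinuousLinearEquiv.prodComm ℝ (Fin N → ℝ) (Fin N → ℝ))
        ((fun z : (Fin N → ℝ) × (Fin N → ℝ) => ((GΨ z.2 z.1, z.2) : _ × _))
          ((ContinuousLinearEquiv.prodComm ℝ (Fin N → ℝ) (Fin N → ℝ)).symm y)))
      = fun z : (Fin N → ℝ) × (Fin N → ℝ) => ((z.1, GΨ z.1 z.2) : _ × _) := rfl
  rw [hgeq] at hconj
  obtain ⟨hΨbij, hΨC, hΨinv⟩ := hconj
  -- relation between ω and the factors
  have hΦright : ∀ z : (Fin N → ℝ) × (Fin N → ℝ),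
      (fun z : (Fin N → ℝ) × (Fin N → ℝ) => ((GΦ z.2 z.1, z.2) : _ × _))
        (((ω z).1, z.2)) = z := by
    rintro ⟨y, θv⟩
    apply Prod.ext
    · funext i
      exact (hω1 y θv i).symm
    · rfl
  have hinvΦ : Function.invFun
        (fun z : (Fin N → ℝ) × (Fin N → ℝ) => ((GΦ z.2 z.1, z.2) : _ × _))
      = fun z => (((ω z).1, z.2) : _ × _) :=
    invFun_eq_of_rightInverse _ _ hΦbij hΦright
  have hωeq : ω = (fun z : (Fin N → ℝ) × (Fin N → ℝ) => ((z.1, GΨ z.1 z.2) : _ × _))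
      ∘ (fun z => (((ω z).1, z.2) : _ × _)) := by
    funext z
    obtain ⟨y, θv⟩ := z
    apply Prod.ext
    · rfl
    · funext i
      exact hω2 y θv i
  have hmidbij : Function.Bijective
      (fun z : (Fin N → ℝ) × (Fin N → ℝ) => (((ω z).1, z.2) : _ × _)) := by
    rw [← hinvΦ]
    exact bijective_invFun _ hΦbij
  have hmidC : ContDiff ℝ 1
      (fun z : (Fin N → ℝ) × (Fin N → ℝ) => (((ω z).1, z.2) : _ × _)) := by
    rw [← hinvΦ]
    exact hΦinv
  have hωbij : Function.Bijective ω := by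
    rw [hωeq]
    exact hΨbij.comp hmidbij
  refine ⟨hωbij, ?_, ?_⟩
  · rw [hωeq]
    exact hΨC.comp hmidC
  · have hωinv : Function.invFun ω
        = (fun z : (Fin N → ℝ) × (Fin N → ℝ) => ((GΦ z.2 z.1, z.2) : _ × _))
          ∘ (Function.invFun (fun z : (Fin N → ℝ) × (Fin N → ℝ) =>
              ((z.1, GΨ z.1 z.2) : _ × _))) := by
      apply invFun_eq_of_rightInverse _ _ hωbij
      intro z
      have h1 : Function.invFun
            (fun z : (Fin N → ℝ) × (Fin N → ℝ) => ((GΦ z.2 z.1, z.2) : _ × _))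
            ((fun z : (Fin N → ℝ) × (Fin N → ℝ) => ((GΦ z.2 z.1, z.2) : _ × _))
              ((Function.invFun (fun z : (Fin N → ℝ) × (Fin N → ℝ) =>
                ((z.1, GΨ z.1 z.2) : _ × _))) z))
          = (Function.invFun (fun z : (Fin N → ℝ) × (Fin N → ℝ) =>
              ((z.1, GΨ z.1 z.2) : _ × _))) z :=
        Function.leftInverse_invFun hΦbij.1 _
      have h2 : (fun z : (Fin N → ℝ) × (Fin N → ℝ) => ((z.1, GΨ z.1 z.2) : _ × _))
          ((Function.invFun (fun z : (Fin N → ℝ) × (Fin N → ℝ) =>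
            ((z.1, GΨ z.1 z.2) : _ × _))) z) = z :=
        Function.rightInverse_invFun hΨbij.2 z
      calc ω ((fun z : (Fin N → ℝ) × (Fin N → ℝ) => ((GΦ z.2 z.1, z.2) : _ × _))
            ((Function.invFun (fun z : (Fin N → ℝ) × (Fin N → ℝ) =>
              ((z.1, GΨ z.1 z.2) : _ × _))) z))
          = (fun z : (Fin N → ℝ) × (Fin N → ℝ) => ((z.1, GΨ z.1 z.2) : _ × _))
              ((fun z => (((ω z).1, z.2) : _ × _))
                ((fun z : (Fin N → ℝ) × (Fin N → ℝ) => ((GΦ z.2 z.1, z.2) : _ × _))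
                  ((Function.invFun (fun z : (Fin N → ℝ) × (Fin N → ℝ) =>
                    ((z.1, GΨ z.1 z.2) : _ × _))) z))) := by
            rw [hωeq]; rfl
        _ = z := by
            rw [← hinvΦ, h1, h2]
    rw [hωinv]
    exact hΦC.comp hΨinv
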